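/- Exactness of the higher-order 2D rectangular sequence: 0 → ℝ → P_{k+1,k+1} →^curl P_{k+1,k} × P_{k,k+1} →^div P_{k,k} → 0, for any k ≥ 0. -/

import Mathlib

/-- `P_{a,b}`: polynomials in `x, y` of degree ≤ a in `x` and ≤ b in `y`. -/
def Pab (a b : ℕ) : Set (ℝ → ℝ → ℝ) :=
  {f | ∃ c : Fin (a + 1) → Fin (b + 1) → ℝ, ∀ x y : ℝ,
    f x y = ∑ i : Fin (a + 1), ∑ j : Fin (b + 1), c i j * x ^ (i : ℕ) * y ^ (j : ℕ)}

/-- `curl u = (∂₂u, −∂₁u)` for a scalar function `u` -/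
noncomputable def curl2 (s : ℝ → ℝ → ℝ) : ℝ → ℝ → ℝ × ℝ :=
  fun x y => (deriv (fun t => s x t) y, -deriv (fun t => s t y) x)

/-- the divergence `∂₁q₁ + ∂₂q₂` -/
noncomputable def dv (q : ℝ → ℝ → ℝ × ℝ) : ℝ → ℝ → ℝ :=
  fun x y => deriv (fun t => (q t y).1) x + deriv (fun t => (q x t).2) y

/-! ### Auxiliary machinery -/

/-- The polynomial function with coefficient matrix `c`. -/
def PS {m n : ℕ} (c : Fin m → Fin n → ℝ) : ℝ → ℝ → ℝ :=
  fun x y => ∑ i : Fin m, ∑ j : Fin n, c i j * x ^ (i : ℕ) * y ^ (j : ℕ)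

/-- Coefficients of the `x`-derivative. -/
def dxC {m n : ℕ} (c : Fin (m+1) → Fin n → ℝ) : Fin m → Fin n → ℝ :=
  fun i j => ((i : ℕ) + 1) * c i.succ j

/-- Coefficients of the `y`-derivative. -/
def dyC {m n : ℕ} (c : Fin m → Fin (n+1) → ℝ) : Fin m → Fin n → ℝ :=
  fun i j => ((j : ℕ) + 1) * c i j.succ

theorem coeffs_zero {n : ℕ} (c : Fin n → ℝ) (h : ∀ x : ℝ, ∑ i, c i * x ^ (i:ℕ) = 0)
    (i : Fin n) : c i = 0 := by
  have hp : (∑ i, Polynomial.C (c i) * Polynomial.X ^ (i:ℕ) : Polynomial ℝ) = 0 := by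
    apply Polynomial.funext
    intro x
    simp [Polynomial.eval_finset_sum, h x]
  have h2 := congrArg (fun p => Polynomial.coeff p (i:ℕ)) hp
  simp only [Polynomial.finset_sum_coeff, Polynomial.coeff_C_mul, Polynomial.coeff_X_pow,
    Polynomial.coeff_zero, mul_ite, mul_one, mul_zero] at h2
  rw [Finset.sum_eq_single i] at h2
  · simpa using h2
  · intro b _ hb
    simp only [Fin.val_eq_val, ite_eq_right_iff]
    exact fun hib => absurd hib.symm hb
  · simp

theorem coeffs_zero2 {m n : ℕ} (c : Fin m → Fin n → ℝ)
    (h : ∀ x y : ℝ, ∑ i, ∑ j, c i j * x ^ (i:ℕ) * y ^ (j:ℕ) = 0) (i : Fin m) (j : Fin n) :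
    c i j = 0 := by
  have key : ∀ x : ℝ, ∑ i : Fin m, c i j * x ^ (i:ℕ) = 0 := by
    intro x
    have hy : ∀ y : ℝ, ∑ j : Fin n, (∑ i : Fin m, c i j * x ^ (i:ℕ)) * y ^ (j:ℕ) = 0 := by
      intro y
      rw [← h x y, Finset.sum_comm]
      congr 1; ext j; rw [Finset.sum_mul]
    exact coeffs_zero _ hy j
  exact coeffs_zero _ key i

theorem hasDerivX {m n : ℕ} (c : Fin m → Fin n → ℝ) (x y : ℝ) :
    HasDerivAt (fun t => PS c t y)
      (∑ i : Fin m, ∑ j : Fin n, c i j * ((i:ℕ) * x ^ ((i:ℕ)-1)) * y ^ (j:ℕ)) x := by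
  apply HasDerivAt.fun_sum
  intro i _
  apply HasDerivAt.fun_sum
  intro j _
  exact (((hasDerivAt_pow (i:ℕ) x).const_mul (c i j)).mul_const (y ^ (j:ℕ)))

theorem hasDerivY {m n : ℕ} (c : Fin m → Fin n → ℝ) (x y : ℝ) :
    HasDerivAt (fun t => PS c x t)
      (∑ i : Fin m, ∑ j : Fin n, c i j * x ^ (i:ℕ) * ((j:ℕ) * y ^ ((j:ℕ)-1))) y := by
  apply HasDerivAt.fun_sum
  intro i _
  apply HasDerivAt.fun_sum
  intro j _
  exact ((hasDerivAt_pow (j:ℕ) y).const_mul (c i j * x ^ (i:ℕ)))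

theorem derivX {m n : ℕ} (c : Fin (m+1) → Fin n → ℝ) (x y : ℝ) :
    deriv (fun t => PS c t y) x = PS (dxC c) x y := by
  rw [(hasDerivX c x y).deriv]
  rw [Fin.sum_univ_succ]
  simp only [Fin.val_zero, Nat.cast_zero, zero_mul, mul_zero, Finset.sum_const_zero, zero_add,
    Fin.val_succ, Nat.cast_add, Nat.cast_one, Nat.add_sub_cancel]
  apply Finset.sum_congr rfl; intro i _
  apply Finset.sum_congr rfl; intro j _
  simp only [PS, dxC]
  ring

theorem derivY {m n : ℕ} (c : Fin m → Fin (n+1) → ℝ) (x y : ℝ) :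
    deriv (fun t => PS c x t) y = PS (dyC c) x y := by
  rw [(hasDerivY c x y).deriv]
  have : ∀ i : Fin m, ∑ j : Fin (n+1), c i j * x ^ (i:ℕ) * ((j:ℕ) * y ^ ((j:ℕ)-1))
      = ∑ j : Fin n, dyC c i j * x ^ (i:ℕ) * y ^ (j:ℕ) := by
    intro i
    rw [Fin.sum_univ_succ]
    simp only [Fin.val_zero, Nat.cast_zero, zero_mul, mul_zero, zero_add,
      Fin.val_succ, Nat.cast_add, Nat.cast_one, Nat.add_sub_cancel]
    apply Finset.sum_congr rfl; intro j _
    simp only [dyC]; ring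
  simp only [this, PS]

theorem PS_neg {m n : ℕ} (c : Fin m → Fin n → ℝ) (x y : ℝ) :
    -(PS c x y) = PS (fun i j => -(c i j)) x y := by
  simp [PS, neg_mul, Finset.sum_neg_distrib]

theorem PS_add {m n : ℕ} (c d : Fin m → Fin n → ℝ) (x y : ℝ) :
    PS c x y + PS d x y = PS (fun i j => c i j + d i j) x y := by
  simp [PS, add_mul, Finset.sum_add_distrib]

theorem const_PS {m n : ℕ} (a : ℝ) (x y : ℝ) :
    a = PS (fun i j => if i = (0 : Fin (m+1)) then (if j = (0 : Fin (n+1)) then a else 0) else 0)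
      x y := by
  simp [PS, ite_mul, zero_mul, Finset.sum_ite_eq, Finset.sum_ite_eq']

theorem curl_PS {m n : ℕ} (c : Fin (m+1) → Fin (n+1) → ℝ) :
    curl2 (PS c) = fun x y => (PS (dyC c) x y, -(PS (dxC c) x y)) := by
  funext x y
  simp only [curl2, derivX, derivY]

/-- the scalar potential coefficients -/
noncomputable def sC {k : ℕ} (a : Fin (k+2) → Fin (k+1) → ℝ) (b : Fin (k+1) → Fin (k+2) → ℝ) :
    Fin (k+2) → Fin (k+2) → ℝ :=
  fun i => Fin.cases (Fin.cases 0 (fun i' => -(b i' 0) / ((i':ℕ)+1)) i)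
    (fun j' => a i j' / ((j':ℕ)+1))

/-- the antiderivative-in-`x` coefficients -/
noncomputable def aC {k : ℕ} (c : Fin (k+1) → Fin (k+1) → ℝ) : Fin (k+2) → Fin (k+1) → ℝ :=
  fun i j => Fin.cases 0 (fun i' => c i' j / ((i':ℕ)+1)) i

theorem dxC_aC {k : ℕ} (c : Fin (k+1) → Fin (k+1) → ℝ) : dxC (aC c) = c := by
  funext i j
  have hi : ((i:ℕ):ℝ) + 1 ≠ 0 := by positivity
  simp only [dxC, aC, Fin.cases_succ]
  field_simp

theorem dyC_sC {k : ℕ} (a : Fin (k+2) → Fin (k+1) → ℝ) (b : Fin (k+1) → Fin (k+2) → ℝ) :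
    dyC (sC a b) = a := by
  funext i j
  have hj : ((j:ℕ):ℝ) + 1 ≠ 0 := by positivity
  simp only [dyC, sC, Fin.cases_succ]
  field_simp

theorem dxC_sC {k : ℕ} (a : Fin (k+2) → Fin (k+1) → ℝ) (b : Fin (k+1) → Fin (k+2) → ℝ)
    (hco : ∀ (i : Fin (k+1)) (j : Fin (k+1)), dxC a i j + dyC b i j = 0) :
    dxC (sC a b) = fun i j => -(b i j) := by
  funext i j
  have hi : ((i:ℕ):ℝ) + 1 ≠ 0 := by positivity
  induction j using Fin.cases with
  | zero =>
      simp only [dxC, sC, Fin.cases_zero, Fin.cases_succ]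
      field_simp
  | succ j' =>
      have hj : ((j':ℕ):ℝ) + 1 ≠ 0 := by positivity
      have h := hco i j'
      simp only [dxC, dyC] at h
      simp only [dxC, sC, Fin.cases_succ]
      field_simp
      linarith

/-- Exactness of the higher-order 2D rectangular sequence
`0 → ℝ → P_{k+1,k+1} → P_{k+1,k} × P_{k,k+1} → P_{k,k} → 0` for every `k ≥ 0`:
the kernel of `curl` on `P_{k+1,k+1}` is the constants, the image of `curl`
equals the kernel of `div` in `P_{k+1,k} × P_{k,k+1}`, and `div` maps
`P_{k+1,k} × P_{k,k+1}` onto `P_{k,k}`. -/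
theorem stmt_17 (k : ℕ) :
    ({s ∈ Pab (k + 1) (k + 1) | curl2 s = fun _ _ => (0, 0)}
        = {s | ∃ c : ℝ, s = fun _ _ => c}) ∧
    ({q | ∃ s ∈ Pab (k + 1) (k + 1), q = curl2 s}
        = {q | ((fun x y => (q x y).1) ∈ Pab (k + 1) k
              ∧ (fun x y => (q x y).2) ∈ Pab k (k + 1))
            ∧ dv q = fun _ _ => 0}) ∧
    ({g | ∃ q : ℝ → ℝ → ℝ × ℝ,
        ((fun x y => (q x y).1) ∈ Pab (k + 1) k
          ∧ (fun x y => (q x y).2) ∈ Pab k (k + 1)) ∧ g = dv q}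
        = Pab k k) := by
  refine ⟨?_, ?_, ?_⟩
  -- Part 1 : kernel of curl = constants
  · ext s
    simp only [Set.mem_setOf_eq, Set.mem_sep_iff, Pab]
    constructor
    · rintro ⟨⟨c, hc⟩, hcurl⟩
      have hs : s = PS c := funext fun x => funext fun y => hc x y
      subst hs
      refine ⟨PS c 0 0, ?_⟩
      funext x y
      have hdx : ∀ x y : ℝ, deriv (fun t => PS c t y) x = 0 := by
        intro x y
        have h1 : curl2 (PS c) x y = (0, 0) := congrFun (congrFun hcurl x) y
        have h2 := congrArg Prod.snd h1
        simpa [curl2, neg_eq_zero] using h2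
      have hdy : ∀ x y : ℝ, deriv (fun t => PS c x t) y = 0 := by
        intro x y
        have h1 : curl2 (PS c) x y = (0, 0) := congrFun (congrFun hcurl x) y
        have h2 := congrArg Prod.fst h1
        simpa [curl2] using h2
      have e1 : PS c x y = PS c 0 y :=
        is_const_of_deriv_eq_zero (fun t => (hasDerivX c t y).differentiableAt)
          (fun t => hdx t y) x 0
      have e2 : PS c 0 y = PS c 0 0 :=
        is_const_of_deriv_eq_zero (fun t => (hasDerivY c 0 t).differentiableAt)
          (fun t => hdy 0 t) y 0
      rw [e1, e2]
    · rintro ⟨a, rfl⟩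
      constructor
      · exact ⟨_, fun x y => const_PS a x y⟩
      · funext x y
        simp [curl2]
  -- Part 2 : image of curl = kernel of div
  · ext q
    simp only [Set.mem_setOf_eq, Pab]
    constructor
    · rintro ⟨s, ⟨c, hc⟩, rfl⟩
      have hs : s = PS c := funext fun x => funext fun y => hc x y
      subst hs
      rw [curl_PS]
      refine ⟨⟨⟨dyC c, fun x y => rfl⟩, ⟨fun i j => -(dxC c i j), fun x y => PS_neg (dxC c) x y⟩⟩, ?_⟩
      · funext x y
        show deriv (fun t => PS (dyC c) t y) x + deriv (fun t => -(PS (dxC c) x t)) y = 0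
        have h2 : deriv (fun t => -(PS (dxC c) x t)) y = -(PS (dyC (dxC c)) x y) := by
          rw [deriv.fun_neg, derivY]
        rw [derivX, h2]
        have hcomm : dxC (dyC c) = dyC (dxC c) := by
          funext i j
          simp only [dxC, dyC]
          ring
        rw [hcomm]
        ring
    · rintro ⟨⟨⟨a, ha⟩, ⟨b, hb⟩⟩, hdiv⟩
      have ha' : (fun x y => (q x y).1) = PS a := funext fun x => funext fun y => ha x y
      have hb' : (fun x y => (q x y).2) = PS b := funext fun x => funext fun y => hb x y
      have hdv : ∀ x y : ℝ, PS (dxC a) x y + PS (dyC b) x y = 0 := by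
        intro x y
        have h0 : deriv (fun t => (q t y).1) x + deriv (fun t => (q x t).2) y = 0 :=
          congrFun (congrFun hdiv x) y
        have e1 : (fun t => (q t y).1) = fun t => PS a t y :=
          funext fun t => congrFun (congrFun ha' t) y
        have e2 : (fun t => (q x t).2) = fun t => PS b x t :=
          funext fun t => congrFun (congrFun hb' x) t
        rw [e1, e2, derivX, derivY] at h0
        exact h0
      have hco : ∀ (i : Fin (k+1)) (j : Fin (k+1)), dxC a i j + dyC b i j = 0 := by
        intro i j
        refine coeffs_zero2 (fun i j => dxC a i j + dyC b i j) (fun x y => ?_) i j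
        show PS (fun i j => dxC a i j + dyC b i j) x y = 0
        rw [← PS_add]
        exact hdv x y
      refine ⟨PS (sC a b), ⟨sC a b, fun x y => rfl⟩, ?_⟩
      rw [curl_PS, dyC_sC, dxC_sC a b hco]
      funext x y
      have h1 : (q x y).1 = PS a x y := congrFun (congrFun ha' x) y
      have h2 : (q x y).2 = PS b x y := congrFun (congrFun hb' x) y
      have h3 : -(PS (fun i j => -(b i j)) x y) = PS b x y := by
        rw [← PS_neg, neg_neg]
      exact Prod.ext (by rw [h1]) (by rw [h2, ← h3])
  -- Part 3 : div is onto
  · ext g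
    simp only [Set.mem_setOf_eq, Pab]
    constructor
    · rintro ⟨q, ⟨⟨a, ha⟩, ⟨b, hb⟩⟩, rfl⟩
      have ha' : (fun x y => (q x y).1) = PS a := funext fun x => funext fun y => ha x y
      have hb' : (fun x y => (q x y).2) = PS b := funext fun x => funext fun y => hb x y
      refine ⟨fun i j => dxC a i j + dyC b i j, fun x y => ?_⟩
      show dv q x y = PS (fun i j => dxC a i j + dyC b i j) x y
      have e1 : (fun t => (q t y).1) = fun t => PS a t y :=
        funext fun t => congrFun (congrFun ha' t) y
      have e2 : (fun t => (q x t).2) = fun t => PS b x t :=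
        funext fun t => congrFun (congrFun hb' x) t
      show deriv (fun t => (q t y).1) x + deriv (fun t => (q x t).2) y = _
      rw [e1, e2, derivX, derivY, PS_add]
    · rintro ⟨c, hc⟩
      have hg : g = PS c := funext fun x => funext fun y => hc x y
      subst hg
      refine ⟨fun x y => (PS (aC c) x y, 0), ⟨⟨aC c, fun x y => rfl⟩,
        ⟨fun _ _ => 0, fun x y => by simp [PS]⟩⟩, ?_⟩
      funext x y
      show PS c x y = deriv (fun t => PS (aC c) t y) x + deriv (fun _ : ℝ => (0:ℝ)) y
      rw [derivX, dxC_aC, deriv_const]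
      ring
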